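/- Let T be an infinite, locally finite rooted tree with root x₀, without leaves, and suppose T has an infinite independent path. Then there exists a strictly increasing sequence (n_i)_{i≥1} of positive integers such that F^{n_i}_T(x₀) is infinite for every i, if and only if T has infinitely many vertices of degree at least three. -/

import Mathlib

open SimpleGraph

/-- The `d`-ary tree: vertices are finite words over `Fin d`, the root is `[]`,
and each vertex `l` is adjacent to its `d` children `a :: l`. -/
def daryTree (d : ℕ) : SimpleGraph (List (Fin d)) where
  Adj x y := (∃ a, y = a :: x) ∨ (∃ a, x = a :: y)
  symm := by
    constructor
    intro x y h
    rcases h with ⟨a, ha⟩ | ⟨a, ha⟩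
    · exact Or.inr ⟨a, ha⟩
    · exact Or.inl ⟨a, ha⟩
  loopless := by
    constructor
    intro x h
    rcases h with ⟨a, ha⟩ | ⟨a, ha⟩ <;>
    · apply_fun List.length at ha
      simp at ha

/-- `C` is a contour of `G`: a finite set of edges whose deletion leaves exactly one
finite connected component, minimal with this property. -/
def IsContour {V : Type*} (G : SimpleGraph V) (C : Set (Sym2 V)) : Prop :=
  C.Finite ∧ C ⊆ G.edgeSet ∧
    (∃! K : (G.deleteEdges C).ConnectedComponent, K.supp.Finite) ∧
    ∀ e ∈ C, ∀ K : (G.deleteEdges (C \ {e})).ConnectedComponent, ¬ K.supp.Finite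

/-- `I` is the (unique) finite connected component `I_C` of `G \ C`. -/
def IsInterior {V : Type*} (G : SimpleGraph V) (C : Set (Sym2 V)) (I : Set V) : Prop :=
  I.Finite ∧ ∃ K : (G.deleteEdges C).ConnectedComponent, K.supp = I

/-- `F^n_G(x)`: the set of contours of `G` of size `n` whose finite component contains `x`. -/
def contours {V : Type*} (G : SimpleGraph V) (x : V) (n : ℕ) : Set (Set (Sym2 V)) :=
  {C | IsContour G C ∧ C.ncard = n ∧
    ((G.deleteEdges C).connectedComponentMk x).supp.Finite}

/-- Rooted contours: contours in `F^n_G(x)` containing an edge incident with `x`. -/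
def rootedContours {V : Type*} (G : SimpleGraph V) (x : V) (n : ℕ) : Set (Set (Sym2 V)) :=
  {C | C ∈ contours G x n ∧ ∃ e ∈ C, x ∈ e}

/-- `G` has an infinite independent path: a one-sided infinite path all of whose
vertices other than possibly the initial one have degree two in `G`. -/
def HasInfiniteIndependentPath {V : Type*} (G : SimpleGraph V) : Prop :=
  ∃ f : ℕ → V, Function.Injective f ∧ (∀ i, G.Adj (f i) (f (i + 1))) ∧
    ∀ i, 1 ≤ i → (G.neighborSet (f i)).ncard = 2

namespace ContourProof

variable {V : Type*}

/-- The edge boundary of a vertex set. -/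
def bd (G : SimpleGraph V) (I : Set V) : Set (Sym2 V) :=
  {e | ∃ u v, G.Adj u v ∧ u ∈ I ∧ v ∉ I ∧ e = s(u, v)}

/-- `I` is connected within itself. -/
def Linked (G : SimpleGraph V) (I : Set V) : Prop :=
  ∀ u ∈ I, ∀ v ∈ I, ∃ p : G.Walk u v, ∀ y ∈ p.support, y ∈ I

variable {G : SimpleGraph V}

lemma adj_mem_bd {I : Set V} {u v : V} (h : G.Adj u v) (hu : u ∈ I) (hv : v ∉ I) :
    s(u, v) ∈ bd G I := ⟨u, v, h, hu, hv, rfl⟩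

lemma not_mem_bd_of_mem {I : Set V} {u v : V} (hu : u ∈ I) (hv : v ∈ I) :
    s(u, v) ∉ bd G I := by
  rintro ⟨a, b, hab, ha, hb, he⟩
  rw [Sym2.eq_iff] at he
  rcases he with ⟨rfl, rfl⟩ | ⟨rfl, rfl⟩
  · exact hb hv
  · exact hb hu

lemma not_mem_bd_of_not_mem {I : Set V} {u v : V} (hu : u ∉ I) (hv : v ∉ I) :
    s(u, v) ∉ bd G I := by
  rintro ⟨a, b, hab, ha, hb, he⟩
  rw [Sym2.eq_iff] at he
  rcases he with ⟨rfl, rfl⟩ | ⟨rfl, rfl⟩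
  · exact hu ha
  · exact hv ha

lemma bd_subset_edgeSet (I : Set V) : bd G I ⊆ G.edgeSet := by
  rintro e ⟨u, v, h, _, _, rfl⟩
  exact h

lemma bd_finite (hloc : ∀ v : V, (G.neighborSet v).Finite) {I : Set V} (hI : I.Finite) :
    (bd G I).Finite := by
  apply Set.Finite.subset (Set.Finite.biUnion hI
    (fun v _ => ((hloc v).image (fun w => s(v, w)))))
  rintro e ⟨u, v, h, hu, hv, rfl⟩
  exact Set.mem_biUnion hu ⟨v, h, rfl⟩

/-- walking in `G.deleteEdges D` starting in `I` never leaves `I`,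
provided all `I`-leaving edges are in `D`. -/
lemma end_mem_of_walk {D : Set (Sym2 V)} {I : Set V}
    (h2 : ∀ u v, G.Adj u v → u ∈ I → v ∉ I → s(u, v) ∈ D) :
    ∀ {a b : V}, (G.deleteEdges D).Walk a b → a ∈ I → b ∈ I := by
  intro a b p
  induction p with
  | nil => exact fun h => h
  | cons h q ih =>
    intro ha
    apply ih
    by_contra hc
    rw [deleteEdges_adj] at h
    exact h.2 (h2 _ _ h.1 ha hc)

lemma supp_eq {D : Set (Sym2 V)} {I : Set V} (hlink : Linked G I)
    (h1 : ∀ u v, G.Adj u v → u ∈ I → v ∈ I → s(u, v) ∉ D)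
    (h2 : ∀ u v, G.Adj u v → u ∈ I → v ∉ I → s(u, v) ∈ D)
    {x : V} (hx : x ∈ I) :
    ((G.deleteEdges D).connectedComponentMk x).supp = I := by
  ext y
  rw [ConnectedComponent.mem_supp_iff, ConnectedComponent.eq]
  constructor
  · rintro ⟨p⟩
    exact end_mem_of_walk h2 p.reverse hx
  · intro hy
    obtain ⟨p, hp⟩ := hlink y hy x hx
    have hpe : ∀ e ∈ p.edges, e ∈ (G.deleteEdges D).edgeSet := by
      intro e he
      rw [edgeSet_deleteEdges]
      refine ⟨p.edges_subset_edgeSet he, ?_⟩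
      induction e using Sym2.ind with
      | _ a b =>
        exact h1 a b (p.edges_subset_edgeSet he)
          (hp a (p.fst_mem_support_of_mem_edges he))
          (hp b (p.snd_mem_support_of_mem_edges he))
    exact (p.transfer _ hpe).reachable

/-- The support of any connected component of `G.deleteEdges D` is `Linked` in `G`. -/
lemma linked_supp (D : Set (Sym2 V)) (x : V) :
    Linked G ((G.deleteEdges D).connectedComponentMk x).supp := by
  classical
  intro u hu v hv
  rw [ConnectedComponent.mem_supp_iff] at hu hv
  have hr : (G.deleteEdges D).Reachable u v := ConnectedComponent.eq.mp (hu.trans hv.symm)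
  obtain ⟨p⟩ := hr
  refine ⟨p.transfer G (fun e he => (G.edgeSet_deleteEdges D ▸ p.edges_subset_edgeSet he).1), ?_⟩
  intro y hy
  rw [Walk.support_transfer] at hy
  rw [ConnectedComponent.mem_supp_iff, ← hu, ConnectedComponent.eq]
  exact ((p.takeUntil y hy).reachable).symm

lemma paths_eq (htree : G.IsTree) {u v : V} {p q : G.Walk u v}
    (hp : p.IsPath) (hq : q.IsPath) : p = q := by
  have h := isAcyclic_iff_path_unique.mp htree.2 ⟨p, hp⟩ ⟨q, hq⟩
  exact congrArg Subtype.val h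

lemma linked_of_hub {I : Set V} {x₀ : V} (hx : x₀ ∈ I)
    (h : ∀ u ∈ I, ∃ p : G.Walk u x₀, ∀ y ∈ p.support, y ∈ I) : Linked G I := by
  intro u hu v hv
  obtain ⟨p, hp⟩ := h u hu
  obtain ⟨q, hq⟩ := h v hv
  refine ⟨p.append q.reverse, ?_⟩
  intro y hy
  rw [Walk.mem_support_append_iff] at hy
  rcases hy with hy | hy
  · exact hp y hy
  · rw [Walk.support_reverse, List.mem_reverse] at hy
    exact hq y hy

lemma two_le_deg (hconn : G.Connected) [Infinite V]
    (hloc : ∀ v : V, (G.neighborSet v).Finite)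
    (hnoleaf : ∀ v : V, (G.neighborSet v).ncard ≠ 1) (v : V) :
    2 ≤ (G.neighborSet v).ncard := by
  obtain ⟨w, hwv⟩ := exists_ne v
  obtain ⟨q⟩ : G.Reachable v w := hconn.preconnected v w
  have hne : (G.neighborSet v).Nonempty := by
    cases q with
    | nil => exact absurd rfl hwv
    | cons h q => exact ⟨_, h⟩
  have h1 := (Set.ncard_pos (hloc v)).mpr hne
  have h2 := hnoleaf v
  omega

section Count

/-- The key counting identity: for a finite nonempty connected set `I` in a tree,
`|∂I| + 2|I| = (∑_{v ∈ I} deg v) + 2`. -/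
lemma count (htree : G.IsTree) (hloc : ∀ v : V, (G.neighborSet v).Finite)
    {I : Set V} (hI : I.Finite) (hne : I.Nonempty) (hlink : Linked G I) :
    (bd G I).ncard + 2 * I.ncard = (∑ v ∈ hI.toFinset, (G.neighborSet v).ncard) + 2 := by
  classical
  haveI : Fintype I := hI.fintype
  set Gi := G.induce I with hGidef
  haveI : DecidableEq ↥I := Classical.decEq _
  haveI : DecidableRel Gi.Adj := Classical.decRel _
  -- connectivity of the induced graph
  have hreach : ∀ {u v : V} (p : G.Walk u v), (∀ y ∈ p.support, y ∈ I) →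
      ∀ (hu : u ∈ I) (hv : v ∈ I), Gi.Reachable ⟨u, hu⟩ ⟨v, hv⟩ := by
    intro u v p
    induction p with
    | nil =>
      intro _ hu hv
      exact Reachable.refl _
    | @cons a c b h q ih =>
      intro hp hu hv
      have hc : c ∈ I := hp c (by simp)
      have hadj : Gi.Adj ⟨a, hu⟩ ⟨c, hc⟩ := h
      exact hadj.reachable.trans (ih (fun y hy => hp y (by simp [hy])) hc hv)
  have hconn : Gi.Connected := by
    rw [connected_iff]
    refine ⟨?_, ⟨⟨hne.choose, hne.choose_spec⟩⟩⟩
    rintro ⟨u, hu⟩ ⟨v, hv⟩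
    obtain ⟨p, hp⟩ := hlink u hu v hv
    exact hreach p hp hu hv
  have hacy : Gi.IsAcyclic := by
    intro a c hc
    exact htree.2 _ ((Walk.map_isCycle_iff_of_injective
      (f := (Embedding.induce I).toHom) Subtype.val_injective).mpr hc)
  have htreeI : Gi.IsTree := ⟨hconn, hacy⟩
  have hcard := htreeI.card_edgeFinset
  have hhs := Gi.sum_degrees_eq_twice_card_edges
  -- degrees in the induced graph
  have hdeg : ∀ a : I, ((G.neighborSet ↑a ∩ I)).ncard = Gi.degree a := by
    intro a
    have himg : (G.neighborSet ↑a ∩ I) = Subtype.val '' (Gi.neighborSet a) := by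
      ext w
      constructor
      · rintro ⟨h1, h2⟩
        exact ⟨⟨w, h2⟩, h1, rfl⟩
      · rintro ⟨⟨w', hw'⟩, h1, rfl⟩
        exact ⟨h1, hw'⟩
    rw [himg, Set.ncard_image_of_injective _ Subtype.val_injective,
      Set.ncard_eq_toFinset_card', Set.toFinset_card, card_neighborSet_eq_degree]
  -- split degrees
  have hsplit : ∀ v ∈ hI.toFinset, (G.neighborSet v).ncard =
      (G.neighborSet v ∩ I).ncard + (G.neighborSet v \ I).ncard := by
    intro v _
    rw [← Set.ncard_union_eq (Set.disjoint_left.mpr (fun x hx hx2 => hx2.2 hx.2))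
      ((hloc v).subset Set.inter_subset_left) ((hloc v).subset Set.diff_subset),
      Set.inter_union_diff]
  -- boundary as a finset
  have hbd : (bd G I).ncard = ∑ v ∈ hI.toFinset, (G.neighborSet v \ I).ncard := by
    have hEvfin : ∀ v : V, (G.neighborSet v \ I).Finite :=
      fun v => (hloc v).subset Set.diff_subset
    set Ev : V → Finset (Sym2 V) :=
      fun v => (hEvfin v).toFinset.image (fun w => s(v, w)) with hEvdef
    have hF : bd G I = ↑(hI.toFinset.biUnion Ev) := by
      ext e
      simp only [Finset.coe_biUnion, Set.mem_iUnion, Finset.mem_coe, Finset.mem_biUnion,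
        Finset.mem_image, Set.Finite.mem_toFinset, hEvdef]
      constructor
      · rintro ⟨u, v, h, hu, hv, rfl⟩
        exact ⟨u, by simpa using hu, v, ⟨h, hv⟩, rfl⟩
      · rintro ⟨u, hu, v, ⟨h, hv⟩, rfl⟩
        exact ⟨u, v, h, by simpa using hu, hv, rfl⟩
    have hinj : ∀ v : V, Set.InjOn (fun w => s(v, w)) (hEvfin v).toFinset := by
      intro v a _ b _ hab
      simp only [Sym2.eq_iff] at hab
      rcases hab with ⟨-, h⟩ | ⟨h1, h2⟩
      · exact h
      · rw [← h1, h2]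
    have hdisj : ∀ x ∈ hI.toFinset, ∀ y ∈ hI.toFinset, x ≠ y → Disjoint (Ev x) (Ev y) := by
      intro x hx y hy hxy
      rw [Finset.disjoint_left]
      rintro e he1 he2
      simp only [hEvdef, Finset.mem_image, Set.Finite.mem_toFinset] at he1 he2
      obtain ⟨a, ⟨ha1, ha2⟩, rfl⟩ := he1
      obtain ⟨b, ⟨hb1, hb2⟩, hb3⟩ := he2
      rw [Sym2.eq_iff] at hb3
      rw [Set.Finite.mem_toFinset] at hx hy
      rcases hb3 with ⟨h1, h2⟩ | ⟨h1, h2⟩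
      · exact hxy (h1.symm)
      · exact hb2 (h2 ▸ hx)
    rw [hF, Set.ncard_coe_finset, Finset.card_biUnion hdisj]
    refine Finset.sum_congr rfl (fun v _ => ?_)
    rw [hEvdef]
    rw [Finset.card_image_of_injOn (by exact_mod_cast hinj v),
      Set.ncard_eq_toFinset_card _ (hEvfin v)]
  -- interior degree sum
  have hin : ∑ v ∈ hI.toFinset, (G.neighborSet v ∩ I).ncard = 2 * Gi.edgeFinset.card := by
    rw [← hhs]
    rw [show hI.toFinset = I.toFinset from hI.toFinset_eq_toFinset, ← Finset.sum_set_coe]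
    exact Finset.sum_congr rfl (fun a _ => hdeg a)
  have hIcard : I.ncard = Fintype.card I := by
    rw [Set.ncard_eq_toFinset_card', Set.toFinset_card]
  have htot : (∑ v ∈ hI.toFinset, (G.neighborSet v).ncard) =
      2 * Gi.edgeFinset.card + (bd G I).ncard := by
    rw [Finset.sum_congr rfl hsplit, Finset.sum_add_distrib, hin, hbd]
  omega

end Count

section Components

/-- In a tree of minimum degree at least two, every component of `G` minus the
boundary of a finite connected set `I`, other than `I` itself, is infinite. -/
lemma outside_inf (htree : G.IsTree) (hloc : ∀ v : V, (G.neighborSet v).Finite)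
    (hdeg2 : ∀ v : V, 2 ≤ (G.neighborSet v).ncard) {I : Set V} (hI : I.Finite) (hlink : Linked G I)
    {v : V} (hv : v ∉ I) :
    ((G.deleteEdges (bd G I)).connectedComponentMk v).supp.Infinite := by
  classical
  set H := G.deleteEdges (bd G I) with hH
  by_contra hfin
  rw [Set.not_infinite] at hfin
  set K := (H.connectedComponentMk v).supp with hK
  have hvK : v ∈ K := ConnectedComponent.connectedComponentMk_mem
  have h1 : ∀ u v, G.Adj u v → u ∈ I → v ∈ I → s(u, v) ∉ bd G I :=
    fun u v _ hu hv => not_mem_bd_of_mem hu hv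
  have h2 : ∀ u v, G.Adj u v → u ∈ I → v ∉ I → s(u, v) ∈ bd G I :=
    fun u v h hu hv => adj_mem_bd h hu hv
  have hKI : ∀ y ∈ K, y ∉ I := by
    intro y hy hyI
    have hs := supp_eq hlink h1 h2 hyI
    rw [ConnectedComponent.mem_supp_iff] at hy
    rw [hy] at hs
    rw [← hK] at hs
    exact hv (hs ▸ hvK)
  have hlinkK : Linked G K := linked_supp _ v
  have hKadj : ∀ y ∈ K, ∀ w, G.Adj y w → w ∉ K → w ∈ I := by
    intro y hy w hadj hw
    by_contra hwI
    apply hw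
    have : H.Adj y w := by
      rw [hH, deleteEdges_adj]
      exact ⟨hadj, not_mem_bd_of_not_mem (hKI y hy) hwI⟩
    rw [ConnectedComponent.mem_supp_iff] at hy ⊢
    rw [← hy]
    exact ConnectedComponent.eq.mpr this.reachable.symm
  -- K has at least two boundary edges
  have hcnt := count htree hloc hfin ⟨v, hvK⟩ hlinkK
  have hsum : 2 * K.ncard ≤ ∑ y ∈ hfin.toFinset, (G.neighborSet y).ncard := by
    calc 2 * K.ncard = ∑ _y ∈ hfin.toFinset, 2 := by
          rw [Finset.sum_const, smul_eq_mul, Set.ncard_eq_toFinset_card _ hfin, mul_comm]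
      _ ≤ _ := Finset.sum_le_sum (fun y _ => hdeg2 y)
  have h2le : 2 ≤ (bd G K).ncard := by omega
  obtain ⟨t, hts, htcard⟩ := Set.exists_subset_card_eq h2le
  obtain ⟨e1, e2, hne12, rfl⟩ := Set.ncard_eq_two.mp htcard
  obtain ⟨w1, z1, hadj1, hw1, hz1, he1⟩ := hts (Set.mem_insert _ _)
  obtain ⟨w2, z2, hadj2, hw2, hz2, he2⟩ := hts (Set.mem_insert_of_mem _ rfl)
  have hz1I : z1 ∈ I := hKadj w1 hw1 z1 hadj1 hz1
  have hz2I : z2 ∈ I := hKadj w2 hw2 z2 hadj2 hz2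
  have hw1I : w1 ∉ I := hKI w1 hw1
  have hw2I : w2 ∉ I := hKI w2 hw2
  -- a path inside I between z1 and z2
  obtain ⟨q0, hq0⟩ := hlink z1 hz1I z2 hz2I
  set q := q0.bypass with hqdef
  have hqpath : q.IsPath := q0.bypass_isPath
  have hqsup : ∀ y ∈ q.support, y ∈ I := fun y hy => hq0 y (q0.support_bypass_subset hy)
  by_cases hww : w1 = w2
  · subst hww
    have hz12 : z1 ≠ z2 := by
      intro h
      apply hne12
      rw [he1, he2, h]
    -- the path z1 - w1 - z2
    have hp2 : (Walk.cons hadj1.symm (Walk.cons hadj2 Walk.nil)).IsPath := by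
      rw [Walk.cons_isPath_iff, Walk.cons_isPath_iff]
      refine ⟨⟨Walk.IsPath.nil, ?_⟩, ?_⟩
      · simp only [Walk.support_nil, List.mem_singleton]
        intro h
        exact hw1I (h ▸ hz2I)
      · simp only [Walk.support_cons, Walk.support_nil, List.mem_cons, List.mem_singleton]
        rintro (h | h | h)
        · exact hw1I (h ▸ hz1I)
        · exact hz12 h
        · exact absurd h List.not_mem_nil
    have heq := paths_eq htree hqpath hp2
    have : w1 ∈ q.support := by
      rw [heq]
      simp
    exact hw1I (hqsup _ this)
  · -- a path inside K between w1 and w2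
    obtain ⟨p0, hp0⟩ := hlinkK w1 hw1 w2 hw2
    set p1 := p0.bypass with hp1def
    have hp1path : p1.IsPath := p0.bypass_isPath
    have hp1sup : ∀ y ∈ p1.support, y ∈ K := fun y hy => hp0 y (p0.support_bypass_subset hy)
    -- the path w1 - z1 - ... - z2 - w2
    have hz2q : z2 ∈ q.support := q.end_mem_support
    have hconcat : (q.concat hadj2.symm).IsPath := by
      rw [Walk.isPath_def, Walk.support_concat]
      rw [List.nodup_append]
      refine ⟨hqpath.support_nodup, List.nodup_singleton _, ?_⟩
      intro y hy
      simp only [List.mem_singleton]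
      intro b hb h
      subst hb
      exact hw2I (h ▸ hqsup y hy)
    have hp2 : (Walk.cons hadj1 (q.concat hadj2.symm)).IsPath := by
      rw [Walk.cons_isPath_iff]
      refine ⟨hconcat, ?_⟩
      rw [Walk.support_concat, List.mem_append]
      rintro (h | h)
      · exact hw1I (hqsup _ h)
      · rw [List.mem_singleton] at h
        exact hww h
    have heq := paths_eq htree hp1path hp2
    have : z1 ∈ p1.support := by
      rw [heq]
      simp only [Walk.support_cons, List.mem_cons]
      right
      rw [Walk.support_concat, List.mem_append]
      exact Or.inl q.start_mem_support
    exact hKI z1 (hp1sup _ this) hz1I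

/-- The boundary of a finite connected set containing `x` is a contour
whose interior is exactly that set. -/
lemma isContour_bd (htree : G.IsTree) (hloc : ∀ v : V, (G.neighborSet v).Finite)
    (hdeg2 : ∀ v : V, 2 ≤ (G.neighborSet v).ncard) {I : Set V} (hI : I.Finite) (hlink : Linked G I)
    {x : V} (hx : x ∈ I) :
    IsContour G (bd G I) ∧ ((G.deleteEdges (bd G I)).connectedComponentMk x).supp = I := by
  classical
  have h1 : ∀ u v, G.Adj u v → u ∈ I → v ∈ I → s(u, v) ∉ bd G I :=
    fun u v _ hu hv => not_mem_bd_of_mem hu hv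
  have h2 : ∀ u v, G.Adj u v → u ∈ I → v ∉ I → s(u, v) ∈ bd G I :=
    fun u v h hu hv => adj_mem_bd h hu hv
  have hsupp := supp_eq hlink h1 h2 hx
  refine ⟨⟨bd_finite hloc hI, bd_subset_edgeSet I, ?_, ?_⟩, hsupp⟩
  · -- unique finite component
    refine ⟨(G.deleteEdges (bd G I)).connectedComponentMk x, by
      show ((G.deleteEdges (bd G I)).connectedComponentMk x).supp.Finite
      rw [hsupp]; exact hI, ?_⟩
    intro K hKfin
    obtain ⟨w, rfl⟩ := K.exists_rep
    by_cases hw : w ∈ I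
    · have : w ∈ ((G.deleteEdges (bd G I)).connectedComponentMk x).supp := by
        rw [hsupp]; exact hw
      rw [ConnectedComponent.mem_supp_iff] at this
      exact this
    · exact absurd hKfin (fun h => (outside_inf htree hloc hdeg2 hI hlink hw) h)
  · -- minimality
    rintro e ⟨u, v, hadj, hu, hv, rfl⟩ K hKfin
    obtain ⟨w, rfl⟩ := K.exists_rep
    have hHle : G.deleteEdges (bd G I) ≤ G.deleteEdges (bd G I \ {s(u, v)}) := by
      intro a b hab
      rw [deleteEdges_adj] at hab ⊢
      exact ⟨hab.1, fun hm => hab.2 hm.1⟩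
    by_cases hw : w ∈ I
    · -- reach v from w, so the component contains the infinite component of v
      have hwu : (G.deleteEdges (bd G I \ {s(u, v)})).Reachable w u := by
        obtain ⟨p, hp⟩ := hlink w hw u hu
        have hpe : ∀ e' ∈ p.edges, e' ∈ (G.deleteEdges (bd G I \ {s(u, v)})).edgeSet := by
          intro e' he'
          rw [edgeSet_deleteEdges]
          refine ⟨p.edges_subset_edgeSet he', ?_⟩
          intro hmem
          induction e' using Sym2.ind with
          | _ a b =>
            exact h1 a b (p.edges_subset_edgeSet he')
              (hp a (p.fst_mem_support_of_mem_edges he'))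
              (hp b (p.snd_mem_support_of_mem_edges he')) hmem.1
        exact (p.transfer _ hpe).reachable
      have huv : (G.deleteEdges (bd G I \ {s(u, v)})).Adj u v := by
        rw [deleteEdges_adj]
        exact ⟨hadj, fun hm => hm.2 rfl⟩
      have hsub : ((G.deleteEdges (bd G I)).connectedComponentMk v).supp ⊆
          ((G.deleteEdges (bd G I \ {s(u, v)})).connectedComponentMk w).supp := by
        intro y hy
        rw [ConnectedComponent.mem_supp_iff, ConnectedComponent.eq] at hy ⊢
        exact (hy.mono (by intro a b hab; exact hHle hab)).trans
          (huv.reachable.symm.trans hwu.symm)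
      exact (((outside_inf htree hloc hdeg2 hI hlink hv).mono hsub)) hKfin
    · have hsub : ((G.deleteEdges (bd G I)).connectedComponentMk w).supp ⊆
          ((G.deleteEdges (bd G I \ {s(u, v)})).connectedComponentMk w).supp := by
        intro y hy
        rw [ConnectedComponent.mem_supp_iff, ConnectedComponent.eq] at hy ⊢
        exact hy.mono (by intro a b hab; exact hHle hab)
      exact (((outside_inf htree hloc hdeg2 hI hlink hw).mono hsub)) hKfin

/-- Structure of contours: every contour whose finite side contains `x₀` is the
boundary of a finite linked set containing `x₀`. -/
lemma contour_structure (htree : G.IsTree) {x₀ : V} {C : Set (Sym2 V)} {n : ℕ}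
    (hC : C ∈ contours G x₀ n) :
    ∃ I : Set V, I.Finite ∧ x₀ ∈ I ∧ Linked G I ∧ C = bd G I := by
  classical
  obtain ⟨⟨hCfin, hCedge, huniq, hmin⟩, hcard, hxfin⟩ := hC
  set H := G.deleteEdges C with hH
  set I := (H.connectedComponentMk x₀).supp with hI
  have hx : x₀ ∈ I := ConnectedComponent.connectedComponentMk_mem
  have hlink : Linked G I := linked_supp _ x₀
  -- no C-edge joins two vertices of I
  have hnotin : ∀ u v, G.Adj u v → u ∈ I → v ∈ I → s(u, v) ∉ C := by
    intro u v hadj hu hv hmem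
    rw [hI, ConnectedComponent.mem_supp_iff] at hu hv
    have hr : H.Reachable u v := ConnectedComponent.eq.mp (hu.trans hv.symm)
    obtain ⟨p⟩ := hr
    have hpe : ∀ e ∈ p.edges, e ∈ G.edgeSet := by
      intro e he
      have h := p.edges_subset_edgeSet he
      rw [hH, edgeSet_deleteEdges] at h
      exact h.1
    set q := (p.transfer G hpe).bypass with hq
    have hqpath : q.IsPath := (p.transfer G hpe).bypass_isPath
    have hqe : ∀ e ∈ q.edges, e ∉ C := by
      intro e he
      have h := (p.transfer G hpe).edges_bypass_subset he
      rw [Walk.edges_transfer] at h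
      have h2 := p.edges_subset_edgeSet h
      rw [hH, edgeSet_deleteEdges] at h2
      exact h2.2
    have hp2 : (Walk.cons hadj Walk.nil).IsPath := by
      rw [Walk.cons_isPath_iff]
      refine ⟨Walk.IsPath.nil, ?_⟩
      simp only [Walk.support_nil, List.mem_singleton]
      exact hadj.ne
    have heq := paths_eq htree hqpath hp2
    apply hqe (s(u, v))
    · rw [heq]
      simp
    · exact hmem
  -- every G-edge leaving I is in C
  have hleave : ∀ u v, G.Adj u v → u ∈ I → v ∉ I → s(u, v) ∈ C := by
    intro u v hadj hu hv
    by_contra hc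
    apply hv
    have : H.Adj u v := by
      rw [hH, deleteEdges_adj]
      exact ⟨hadj, hc⟩
    rw [hI, ConnectedComponent.mem_supp_iff] at hu ⊢
    rw [← hu]
    exact ConnectedComponent.eq.mpr this.reachable.symm
  refine ⟨I, hxfin, hx, hlink, Set.Subset.antisymm ?_ ?_⟩
  · -- C ⊆ bd I
    intro e he
    have heE : e ∈ G.edgeSet := hCedge he
    induction e using Sym2.ind with
    | _ u v =>
      have hadj : G.Adj u v := heE
      by_cases hu : u ∈ I
      · by_cases hv : v ∈ I
        · exact absurd he (hnotin u v hadj hu hv)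
        · exact adj_mem_bd hadj hu hv
      · by_cases hv : v ∈ I
        · exact ⟨v, u, hadj.symm, hv, hu, Sym2.eq_swap⟩
        · -- both endpoints outside I : contradicts minimality
          exfalso
          have h1' : ∀ a b, G.Adj a b → a ∈ I → b ∈ I → s(a, b) ∉ C \ {s(u, v)} :=
            fun a b hab ha hb hm => hnotin a b hab ha hb hm.1
          have h2' : ∀ a b, G.Adj a b → a ∈ I → b ∉ I → s(a, b) ∈ C \ {s(u, v)} := by
            intro a b hab ha hb
            refine ⟨hleave a b hab ha hb, ?_⟩
            intro hm
            rw [Set.mem_singleton_iff, Sym2.eq_iff] at hm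
            rcases hm with ⟨h1, _⟩ | ⟨h1, _⟩
            · exact hu (h1 ▸ ha)
            · exact hv (h1 ▸ ha)
          have := supp_eq hlink h1' h2' hx
          exact hmin _ he _ (this ▸ hxfin)
  · -- bd I ⊆ C
    rintro e ⟨u, v, hadj, hu, hv, rfl⟩
    exact hleave u v hadj hu hv

end Components

section Balls

variable {x₀ : V}

lemma reachSet_finite (hloc : ∀ v : V, (G.neighborSet v).Finite) (x₀ : V) :
    ∀ r : ℕ, {v | ∃ q : G.Walk v x₀, q.length ≤ r}.Finite := by
  intro r
  induction r with
  | zero =>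
    apply Set.Finite.subset (Set.finite_singleton x₀)
    rintro v ⟨q, hq⟩
    rw [Set.mem_singleton_iff]
    exact Walk.eq_of_length_eq_zero (Nat.le_zero.mp hq)
  | succ r ih =>
    apply Set.Finite.subset (ih.union (Set.Finite.biUnion ih (fun u _ => hloc u)))
    rintro v ⟨q, hq⟩
    cases q with
    | nil => exact Or.inl ⟨Walk.nil, Nat.zero_le _⟩
    | @cons a c b h q' =>
      have hc : c ∈ {v | ∃ q : G.Walk v x₀, q.length ≤ r} := ⟨q', by simpa using hq⟩
      exact Or.inr (Set.mem_biUnion hc h.symm)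

lemma ball_finite (hconn : G.Connected) (hloc : ∀ v : V, (G.neighborSet v).Finite)
    (x₀ : V) (r : ℕ) : {v | G.dist x₀ v ≤ r}.Finite := by
  apply (reachSet_finite hloc x₀ r).subset
  intro v hv
  obtain ⟨p, hp⟩ := hconn.exists_walk_length_eq_dist x₀ v
  exact ⟨p.reverse, by rw [Walk.length_reverse, hp]; exact hv⟩

lemma ball_linked (hconn : G.Connected) (x₀ : V) (r : ℕ) :
    Linked G {v | G.dist x₀ v ≤ r} := by
  classical
  apply linked_of_hub (I := {v | G.dist x₀ v ≤ r}) (x₀ := x₀)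
    (show x₀ ∈ {v | G.dist x₀ v ≤ r} by simp [Set.mem_setOf_eq, SimpleGraph.dist_self])
  intro u hu
  obtain ⟨p, hp⟩ := hconn.exists_walk_length_eq_dist x₀ u
  refine ⟨p.reverse, ?_⟩
  intro y hy
  rw [Walk.support_reverse, List.mem_reverse] at hy
  calc G.dist x₀ y ≤ (p.takeUntil y hy).length := dist_le _
    _ ≤ p.length := Walk.length_takeUntil_le p hy
    _ = G.dist x₀ u := hp
    _ ≤ r := hu

end Balls

section RayWalk

/-- A walk along the ray from `f 1` to `f (1 + k)`. -/
lemma rayWalk {f : ℕ → V} (hfadj : ∀ i, G.Adj (f i) (f (i + 1))) (k : ℕ) :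
    ∃ p : G.Walk (f 1) (f (1 + k)), ∀ y ∈ p.support, ∃ j, 1 ≤ j ∧ j ≤ 1 + k ∧ y = f j := by
  induction k with
  | zero => exact ⟨Walk.nil, fun y hy => ⟨1, le_refl _, le_refl _, by simpa using hy⟩⟩
  | succ k ih =>
    obtain ⟨p, hp⟩ := ih
    refine ⟨p.concat (hfadj (1 + k)), ?_⟩
    intro y hy
    rw [Walk.support_concat, List.mem_append] at hy
    rcases hy with hy | hy
    · obtain ⟨j, h1, h2, h3⟩ := hp y hy
      exact ⟨j, h1, by omega, h3⟩
    · rw [List.mem_singleton] at hy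
      exact ⟨1 + k + 1, by omega, by omega, hy⟩

end RayWalk

/-- Construction of a strictly monotone sequence from unboundedness. -/
lemma exists_strictMono_seq (P : ℕ → Prop) (h : ∀ b, ∃ s, b < s ∧ P s) :
    ∃ n : ℕ → ℕ, StrictMono n ∧ (∀ i, 1 ≤ n i) ∧ ∀ i, P (n i) := by
  choose g hg1 hg2 using h
  refine ⟨fun i => g^[i + 1] 0, ?_, ?_, ?_⟩
  · apply strictMono_nat_of_lt_succ
    intro i
    show g^[i + 1] 0 < g^[i + 1 + 1] 0
    rw [Function.iterate_succ_apply' g (i + 1)]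
    exact hg1 _
  · intro i
    show 1 ≤ g^[i + 1] 0
    rw [Function.iterate_succ_apply']
    have := hg1 (g^[i] 0)
    omega
  · intro i
    show P (g^[i + 1] 0)
    rw [Function.iterate_succ_apply']
    exact hg2 _

end ContourProof

open ContourProof

/-- Let `T` be an infinite, locally finite rooted tree with root `x₀`,
without leaves, having an infinite independent path.  Then there is a strictly increasing
sequence `(n_i)` of positive integers with `F^{n_i}_T(x₀)` infinite for every `i` if and
only if `T` has infinitely many vertices of degree at least three. -/
theorem exists_strictMono_infinite_contours_iff {V : Type*} (G : SimpleGraph V) (x₀ : V)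
    (htree : G.IsTree) (hlocfin : ∀ v : V, (G.neighborSet v).Finite) (hinf : Infinite V)
    (hnoleaf : ∀ v : V, (G.neighborSet v).ncard ≠ 1)
    (hpath : HasInfiniteIndependentPath G) :
    (∃ n : ℕ → ℕ, StrictMono n ∧ (∀ i, 1 ≤ n i) ∧ ∀ i, (contours G x₀ (n i)).Infinite) ↔
      {v : V | 3 ≤ (G.neighborSet v).ncard}.Infinite := by
  classical
  haveI := hinf
  have hconn : G.Connected := htree.isConnected
  have hdeg2 : ∀ v : V, 2 ≤ (G.neighborSet v).ncard :=
    two_le_deg hconn hlocfin hnoleaf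
  constructor
  · -- forward direction
    rintro ⟨n, hmono, hpos, hinfin⟩
    by_contra hSfin
    rw [Set.not_infinite] at hSfin
    set B := 2 + ∑ v ∈ hSfin.toFinset, (G.neighborSet v).ncard with hB
    obtain ⟨C, hC⟩ := (hinfin (B + 1)).nonempty
    obtain ⟨I, hIfin, hxI, hlink, rfl⟩ := contour_structure htree hC
    have hcard : (bd G I).ncard = n (B + 1) := hC.2.1
    have hcnt := count htree hlocfin hIfin ⟨x₀, hxI⟩ hlink
    have hge : B + 1 ≤ n (B + 1) := hmono.le_apply
    -- bound the degree sum of I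
    have hbound : ∑ v ∈ hIfin.toFinset, (G.neighborSet v).ncard ≤
        2 * I.ncard + ∑ v ∈ hSfin.toFinset, (G.neighborSet v).ncard := by
      have hsplit : ∑ v ∈ hIfin.toFinset, (G.neighborSet v).ncard =
          (∑ v ∈ hIfin.toFinset ∩ hSfin.toFinset, (G.neighborSet v).ncard) +
          ∑ v ∈ hIfin.toFinset \ hSfin.toFinset, (G.neighborSet v).ncard :=
        (Finset.sum_inter_add_sum_sdiff _ _ _).symm
      have hb1 : ∑ v ∈ hIfin.toFinset ∩ hSfin.toFinset, (G.neighborSet v).ncard ≤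
          ∑ v ∈ hSfin.toFinset, (G.neighborSet v).ncard :=
        Finset.sum_le_sum_of_subset Finset.inter_subset_right
      have hb2 : ∑ v ∈ hIfin.toFinset \ hSfin.toFinset, (G.neighborSet v).ncard ≤
          2 * I.ncard := by
        calc ∑ v ∈ hIfin.toFinset \ hSfin.toFinset, (G.neighborSet v).ncard ≤
            ∑ _v ∈ hIfin.toFinset \ hSfin.toFinset, 2 := by
              apply Finset.sum_le_sum
              intro v hv
              rw [Finset.mem_sdiff, Set.Finite.mem_toFinset, Set.Finite.mem_toFinset] at hv
              have : ¬ 3 ≤ (G.neighborSet v).ncard := hv.2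
              omega
          _ = 2 * (hIfin.toFinset \ hSfin.toFinset).card := by
              rw [Finset.sum_const, smul_eq_mul, mul_comm]
          _ ≤ 2 * hIfin.toFinset.card :=
              Nat.mul_le_mul_left 2 (Finset.card_le_card (Finset.sdiff_subset))
          _ = 2 * I.ncard := by rw [Set.ncard_eq_toFinset_card _ hIfin]
      omega
    omega
  · -- backward direction
    intro hS
    obtain ⟨f, hfinj, hfadj, hfdeg⟩ := hpath
    obtain ⟨W⟩ : G.Reachable x₀ (f 1) := hconn.preconnected x₀ (f 1)
    -- main claim: arbitrarily large sizes with infinitely many contours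
    have main : ∀ b, ∃ s, b < s ∧ (contours G x₀ s).Infinite := by
      intro b
      obtain ⟨T, hTsub, hTfin, hTcard⟩ := hS.exists_subset_ncard_eq (b + 1)
      -- the radius
      set r := (hTfin.toFinset ∪ W.support.toFinset).sup (G.dist x₀) with hr
      set A := {v | G.dist x₀ v ≤ r} with hA
      have hTball : ∀ v ∈ T, v ∈ A := by
        intro v hv
        rw [hA]
        show G.dist x₀ v ≤ r
        rw [hr]
        exact Finset.le_sup (Finset.mem_union_left _ (hTfin.mem_toFinset.mpr hv))
      have hWball : ∀ y ∈ W.support, y ∈ A := by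
        intro y hy
        rw [hA]
        show G.dist x₀ y ≤ r
        rw [hr]
        exact Finset.le_sup (Finset.mem_union_right _ (List.mem_toFinset.mpr hy))
      have hAfin : A.Finite := hA ▸ ball_finite hconn hlocfin x₀ r
      have hAlink : Linked G A := hA ▸ ball_linked hconn x₀ r
      have hx₀A : x₀ ∈ A := by
        rw [hA]
        show G.dist x₀ x₀ ≤ r
        simp [SimpleGraph.dist_self]
      have hcntA := count htree hlocfin hAfin ⟨x₀, hx₀A⟩ hAlink
      set s₀ := (bd G A).ncard with hs₀
      -- s₀ > b
      have hsize : b < s₀ := by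
        have hTsubF : hTfin.toFinset ⊆ hAfin.toFinset := by
          intro v hv
          rw [Set.Finite.mem_toFinset] at hv ⊢
          exact hTball v hv
        have hsplit : ∑ v ∈ hAfin.toFinset, (G.neighborSet v).ncard =
            (∑ v ∈ hTfin.toFinset, (G.neighborSet v).ncard) +
            ∑ v ∈ hAfin.toFinset \ hTfin.toFinset, (G.neighborSet v).ncard := by
          rw [← Finset.sum_inter_add_sum_sdiff hAfin.toFinset hTfin.toFinset]
          congr 1
          rw [Finset.inter_eq_right.mpr hTsubF]
        have hc1 : hTfin.toFinset.card = b + 1 := by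
          rw [← Set.ncard_eq_toFinset_card _ hTfin]; exact hTcard
        have hT3 : 3 * (b + 1) ≤ ∑ v ∈ hTfin.toFinset, (G.neighborSet v).ncard := by
          calc 3 * (b + 1) = ∑ _v ∈ hTfin.toFinset, 3 := by
                rw [Finset.sum_const, smul_eq_mul, hc1, mul_comm]
            _ ≤ _ := Finset.sum_le_sum (fun v hv => hTsub (hTfin.mem_toFinset.mp hv))
        have hrest : 2 * (hAfin.toFinset \ hTfin.toFinset).card ≤
            ∑ v ∈ hAfin.toFinset \ hTfin.toFinset, (G.neighborSet v).ncard := by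
          calc 2 * (hAfin.toFinset \ hTfin.toFinset).card
              = ∑ _v ∈ hAfin.toFinset \ hTfin.toFinset, 2 := by
                rw [Finset.sum_const, smul_eq_mul, mul_comm]
            _ ≤ _ := Finset.sum_le_sum (fun v _ => hdeg2 v)
        have hc2 : (hAfin.toFinset \ hTfin.toFinset).card + hTfin.toFinset.card
            = A.ncard := by
          rw [Finset.card_sdiff_add_card_eq_card hTsubF, Set.ncard_eq_toFinset_card _ hAfin]
        omega
      refine ⟨s₀, hsize, ?_⟩
      -- the family of interiors
      set Im : ℕ → Set V := fun m => A ∪ (f '' Set.Icc 1 m) with hIm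
      have hx₀Im : ∀ m, x₀ ∈ Im m := fun m => Or.inl hx₀A
      have hImfin : ∀ m, (Im m).Finite :=
        fun m => hAfin.union ((Set.finite_Icc 1 m).image f)
      have hImlink : ∀ m, Linked G (Im m) := by
        intro m
        apply linked_of_hub (hx₀Im m)
        intro u hu
        rcases hu with hu | hu
        · obtain ⟨p, hp⟩ := hAlink u hu x₀ hx₀A
          exact ⟨p, fun y hy => Or.inl (hp y hy)⟩
        · obtain ⟨j, hj, rfl⟩ := hu
          rw [Set.mem_Icc] at hj
          obtain ⟨p, hp⟩ := rayWalk (G := G) hfadj (j - 1)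
          have hj1 : 1 + (j - 1) = j := by omega
          set p' := (p.copy rfl (congrArg f hj1)).reverse with hp'
          -- p' : G.Walk (f j) (f 1)
          refine ⟨p'.append W.reverse, ?_⟩
          intro y hy
          rw [Walk.mem_support_append_iff] at hy
          rcases hy with hy | hy
          · rw [hp', Walk.support_reverse, List.mem_reverse, Walk.support_copy] at hy
            obtain ⟨i, hi1, hi2, rfl⟩ := hp y hy
            refine Or.inr ⟨i, Set.mem_Icc.mpr ⟨hi1, by omega⟩, rfl⟩
          · rw [Walk.support_reverse, List.mem_reverse] at hy
            exact Or.inl (hWball y hy)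
      -- each Im m has boundary of size s₀
      have hImsize : ∀ m, 1 ≤ m → (bd G (Im m)).ncard = s₀ := by
        intro m hm
        set E := (f '' Set.Icc 1 m) \ A with hE
        have hEfin : E.Finite := ((Set.finite_Icc 1 m).image f).subset Set.diff_subset
        have hImeq : Im m = A ∪ E := by
          rw [hIm, hE]
          ext y
          simp only [Set.mem_union, Set.mem_diff]
          tauto
        have hdisj : Disjoint A E := Set.disjoint_left.mpr (fun y hy hy2 => hy2.2 hy)
        have htofin : (hImfin m).toFinset = hAfin.toFinset ∪ hEfin.toFinset := by
          ext y
          simp only [Set.Finite.mem_toFinset, Finset.mem_union, hImeq, Set.mem_union]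
        have hdisjF : Disjoint hAfin.toFinset hEfin.toFinset := by
          rw [Finset.disjoint_left]
          intro y hy1 hy2
          rw [Set.Finite.mem_toFinset] at hy1 hy2
          exact hy2.2 hy1
        have hcntI := count htree hlocfin (hImfin m) ⟨x₀, hx₀Im m⟩ (hImlink m)
        have hsumI : ∑ v ∈ (hImfin m).toFinset, (G.neighborSet v).ncard =
            (∑ v ∈ hAfin.toFinset, (G.neighborSet v).ncard) + 2 * E.ncard := by
          rw [htofin, Finset.sum_union hdisjF]
          congr 1
          have : ∀ v ∈ hEfin.toFinset, (G.neighborSet v).ncard = 2 := by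
            intro v hv
            rw [Set.Finite.mem_toFinset, hE] at hv
            obtain ⟨⟨j, hj, rfl⟩, -⟩ := hv
            exact hfdeg j hj.1
          rw [Finset.sum_congr rfl this, Finset.sum_const, smul_eq_mul,
            ← Set.ncard_eq_toFinset_card _ hEfin, mul_comm]
        have hcardI : (Im m).ncard = A.ncard + E.ncard := by
          rw [hImeq, Set.ncard_union_eq hdisj hAfin hEfin]
        rw [hcardI, hsumI] at hcntI
        omega
      -- infinitely many m give distinct contours
      set M := {m : ℕ | 1 ≤ m ∧ f m ∉ A ∧ (∀ k, f m = f k → m = k)} with hM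
      have hMinf : M.Infinite := by
        have hpre : (f ⁻¹' A).Finite := hAfin.preimage hfinj.injOn
        have hsub : (Set.Ici 1 \ f ⁻¹' A) ⊆ M := by
          intro m hm
          exact ⟨hm.1, hm.2, fun k hk => hfinj hk⟩
        exact ((Set.Ici_infinite 1).diff hpre).mono hsub
      have hmem : ∀ m ∈ M, bd G (Im m) ∈ contours G x₀ s₀ := by
        intro m hm
        obtain ⟨hcont, hsupp⟩ := isContour_bd htree hlocfin hdeg2 (hImfin m)
          (hImlink m) (hx₀Im m)
        refine ⟨hcont, hImsize m hm.1, ?_⟩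
        rw [hsupp]
        exact hImfin m
      have hinjM : Set.InjOn (fun m => bd G (Im m)) M := by
        intro m hm m' hm' heq
        have h1 := (isContour_bd htree hlocfin hdeg2 (hImfin m) (hImlink m) (hx₀Im m)).2
        have h2 := (isContour_bd htree hlocfin hdeg2 (hImfin m') (hImlink m') (hx₀Im m')).2
        have hIeq : Im m = Im m' := by
          rw [← h1, ← h2]
          simp only at heq
          rw [heq]
        have hle1 : m' ≤ m := by
          have : f m' ∈ Im m' := Or.inr ⟨m', ⟨hm'.1, le_refl _⟩, rfl⟩
          rw [← hIeq] at this
          rcases this with h | ⟨j, hj, hjeq⟩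
          · exact absurd h hm'.2.1
          · rw [Set.mem_Icc] at hj
            have := hfinj hjeq.symm
            omega
        have hle2 : m ≤ m' := by
          have : f m ∈ Im m := Or.inr ⟨m, ⟨hm.1, le_refl _⟩, rfl⟩
          rw [hIeq] at this
          rcases this with h | ⟨j, hj, hjeq⟩
          · exact absurd h hm.2.1
          · rw [Set.mem_Icc] at hj
            have := hfinj hjeq.symm
            omega
        omega
      have : ((fun m => bd G (Im m)) '' M).Infinite :=
        (Set.infinite_image_iff hinjM).mpr hMinf
      apply this.mono
      rintro _ ⟨m, hm, rfl⟩
      exact hmem m hm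
    obtain ⟨n, h1, h2, h3⟩ := exists_strictMono_seq _ main
    exact ⟨n, h1, h2, h3⟩
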